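/- For every matrix V ∈ ℝ^{k×(n-k)}, the vector τ_V is a finite tropical Plücker vector: for every (k−2)-subset ρ of [n] and pairwise distinct i,j,ℓ,m ∈ [n]∖ρ, the minimum of the three numbers τ_V(ρij)+τ_V(ρℓm), τ_V(ρiℓ)+τ_V(ρjm), τ_V(ρim)+τ_V(ρjℓ) is attained at least twice. -/

import Mathlib

open scoped Classical

/-- The tropical determinant of a `k × k` matrix over `ℝ ∪ {∞}`:
the minimum over all permutations `ω` of `∑ i, A i (ω i)`. -/
noncomputable def tdet {k : ℕ} (A : Matrix (Fin k) (Fin k) (WithTop ℝ)) : WithTop ℝ :=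
  Finset.univ.inf fun ω : Equiv.Perm (Fin k) => ∑ i, A i (ω i)

/-- The augmented matrix `V̄ = (E_k | V)`: the first `k` columns form the tropical
identity matrix (`0` on the diagonal, `∞` off the diagonal), the remaining columns are `V`. -/
noncomputable def augmented {k n : ℕ} (V : Matrix (Fin k) (Fin (n - k)) ℝ) :
    Matrix (Fin k) (Fin n) (WithTop ℝ) := fun i j =>
  if h : (j : ℕ) < k then (if (i : ℕ) = (j : ℕ) then (0 : WithTop ℝ) else ⊤)
  else V i ⟨(j : ℕ) - k, by have := j.isLt; omega⟩

/-- `τ_V(σ) = tdet(V̄_σ)`, the tropical determinant of the `k × k` submatrix of the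
augmented matrix with columns indexed by the `k`-subset `σ` of `[n]`. -/
noncomputable def tau {k n : ℕ} (V : Matrix (Fin k) (Fin (n - k)) ℝ)
    (σ : Finset (Fin n)) : WithTop ℝ :=
  if h : σ.card = k then tdet (fun i l => augmented V i (σ.orderIsoOfFin h l)) else ⊤

open Finset Function

section Aux
variable {k n : ℕ}

lemma tau_le (V : Matrix (Fin k) (Fin (n - k)) ℝ) {σ : Finset (Fin n)} (h : σ.card = k)
    {f : Fin k → Fin n} (hf : Injective f) (him : ∀ r, f r ∈ σ) :
    tau V σ ≤ ∑ r, augmented V r (f r) := by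
  classical
  set e := σ.orderIsoOfFin h with he
  set g : Fin k → Fin k := fun r => e.symm ⟨f r, him r⟩ with hg
  have hginj : Injective g := by
    intro a b hab
    have h2 : (⟨f a, him a⟩ : {x // x ∈ σ}) = ⟨f b, him b⟩ := e.symm.injective hab
    exact hf (congrArg Subtype.val h2)
  set ω : Equiv.Perm (Fin k) := Equiv.ofBijective g (Finite.injective_iff_bijective.mp hginj) with hω
  rw [tau, dif_pos h]
  refine le_trans (Finset.inf_le (Finset.mem_univ ω)) (le_of_eq ?_)
  apply Finset.sum_congr rfl
  intro r _
  show augmented V r ((e (ω r) : Fin n)) = augmented V r (f r)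
  have : ω r = g r := rfl
  rw [this, hg]
  simp

lemma tau_exists_min (V : Matrix (Fin k) (Fin (n - k)) ℝ) {σ : Finset (Fin n)} (h : σ.card = k) :
    ∃ f : Fin k → Fin n, Injective f ∧ (∀ r, f r ∈ σ) ∧
      tau V σ = ∑ r, augmented V r (f r) := by
  obtain ⟨ω, -, hω⟩ := Finset.exists_mem_eq_inf (Finset.univ : Finset (Equiv.Perm (Fin k)))
    Finset.univ_nonempty (fun ω : Equiv.Perm (Fin k) => ∑ i, augmented V i (σ.orderIsoOfFin h (ω i)))
  refine ⟨fun r => σ.orderIsoOfFin h (ω r), ?_, fun r => (σ.orderIsoOfFin h (ω r)).2, ?_⟩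
  · intro a b hab
    exact ω.injective ((σ.orderIsoOfFin h).injective (Subtype.ext hab))
  · rw [tau, dif_pos h]
    exact hω

lemma image_eq {σ : Finset (Fin n)} (h : σ.card = k) {f : Fin k → Fin n}
    (hf : Injective f) (him : ∀ r, f r ∈ σ) : Finset.image f Finset.univ = σ := by
  apply Finset.eq_of_subset_of_card_le
  · intro x hx
    obtain ⟨r, -, hr⟩ := Finset.mem_image.mp hx
    exact hr ▸ him r
  · rw [Finset.card_image_of_injective _ hf, Finset.card_univ, Fintype.card_fin, h]



lemma swap_lemma {k n : ℕ} {P Q : Fin k → Fin n} (hP : Injective P) (hQ : Injective Q)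
    {i : Fin n} (hi1 : i ∈ Finset.image P Finset.univ) (hi2 : i ∉ Finset.image Q Finset.univ) :
    ∃ (P' Q' : Fin k → Fin n) (e : Fin n),
      Injective P' ∧ Injective Q' ∧
      e ∈ Finset.image Q Finset.univ ∧ e ∉ Finset.image P Finset.univ ∧
      Finset.image P' Finset.univ = insert e ((Finset.image P Finset.univ).erase i) ∧
      Finset.image Q' Finset.univ = insert i ((Finset.image Q Finset.univ).erase e) ∧
      ∀ r, (P' r = P r ∧ Q' r = Q r) ∨ (P' r = Q r ∧ Q' r = P r) := by
  classical
  obtain ⟨r0, -, hr0⟩ := Finset.mem_image.mp hi1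
  haveI : Nonempty (Fin k) := ⟨r0⟩
  set σ₁ := Finset.image P Finset.univ with hσ₁
  set σ₂ := Finset.image Q Finset.univ with hσ₂
  set c : ℕ → Fin n := fun s => (fun x => Q (Function.invFun P x))^[s] i with hcdef
  have hc0 : c 0 = i := rfl
  have hcs : ∀ s, c (s + 1) = Q (Function.invFun P (c s)) := by
    intro s
    exact Function.iterate_succ_apply' _ s i
  have hPinv : ∀ x ∈ σ₁, P (Function.invFun P x) = x := by
    intro x hx
    obtain ⟨r, -, hr⟩ := Finset.mem_image.mp hx
    exact Function.invFun_eq ⟨r, hr⟩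
  have hmem2 : ∀ s, c (s + 1) ∈ σ₂ := by
    intro s
    rw [hcs]
    exact Finset.mem_image_of_mem _ (Finset.mem_univ _)
  -- injectivity of c on an initial segment staying in σ₁
  have hinj : ∀ N, (∀ v < N, c v ∈ σ₁) → ∀ s u, s < u → u ≤ N → c s ≠ c u := by
    intro N hN s
    induction s with
    | zero =>
      intro u hu _ hequ
      match u, hu with
      | v + 1, _ =>
        rw [hc0] at hequ
        exact hi2 (hequ ▸ hmem2 v)
    | succ s ih =>
      intro u hsu huN hequ
      match u, hsu with
      | v + 1, hsv =>
        have h1 : c s ∈ σ₁ := hN s (by omega)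
        have h2 : c v ∈ σ₁ := hN v (by omega)
        have h3 : Function.invFun P (c s) = Function.invFun P (c v) := by
          apply hQ
          rw [← hcs, ← hcs]
          exact hequ
        have h4 : c s = c v := by
          rw [← hPinv _ h1, ← hPinv _ h2, h3]
        exact ih v (by omega) (by omega) h4
  -- existence of an exit time
  have hex : ∃ s, 0 < s ∧ c s ∉ σ₁ := by
    by_contra hcon
    push_neg at hcon
    have hall : ∀ v, c v ∈ σ₁ := by
      intro v
      cases v with
      | zero => rw [hc0]; exact hi1
      | succ v => exact hcon _ (Nat.succ_pos v)
    have hcinj : Function.Injective c := by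
      intro s u hequ
      rcases lt_trichotomy s u with h | h | h
      · exact absurd hequ (hinj (u + 1) (fun v _ => hall v) s u h (by omega))
      · exact h
      · exact absurd hequ.symm (hinj (s + 1) (fun v _ => hall v) u s h (by omega))
    obtain ⟨a, b, hab, heq⟩ := Finite.exists_ne_map_eq_of_infinite c
    exact hab (hcinj heq)
  set t := Nat.find hex with htdef
  obtain ⟨htpos, htnot⟩ : 0 < t ∧ c t ∉ σ₁ := Nat.find_spec hex
  have htmem : ∀ v < t, c v ∈ σ₁ := by
    intro v hv
    cases v with
    | zero => rw [hc0]; exact hi1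
    | succ v =>
      by_contra hvn
      exact Nat.find_min hex hv ⟨Nat.succ_pos v, hvn⟩
  have hinjt : ∀ s u, s < u → u ≤ t → c s ≠ c u := hinj t htmem
  have hceq : ∀ s u, s ≤ t → u ≤ t → c s = c u → s = u := by
    intro s u hs hu hequ
    rcases lt_trichotomy s u with h | h | h
    · exact absurd hequ (hinjt s u h hu)
    · exact h
    · exact absurd hequ.symm (hinjt u s h hs)
  have hct2 : c t ∈ σ₂ := by
    match t, htpos with
    | v + 1, _ => exact hmem2 v
  -- the swap
  have hQr : ∀ r s, s < t → P r = c s → Q r = c (s + 1) := by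
    intro r s hs hr
    have h1 : Function.invFun P (c s) = r := by
      rw [← hr, Function.leftInverse_invFun hP]
    rw [hcs, h1]
  have hQnot : ∀ r, ¬(∃ s, s < t ∧ P r = c s) → ∀ u, u ≤ t → Q r ≠ c u := by
    intro r hnr u hu hequ
    cases u with
    | zero =>
      rw [hc0] at hequ
      exact hi2 (hequ ▸ Finset.mem_image_of_mem Q (Finset.mem_univ r))
    | succ v =>
      have hv : c v ∈ σ₁ := htmem v (by omega)
      have h1 : r = Function.invFun P (c v) := by
        apply hQ
        rw [hequ, hcs]
      have h2 : P r = c v := by rw [h1, hPinv _ hv]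
      exact hnr ⟨v, by omega, h2⟩
  set P' : Fin k → Fin n := fun r => if (∃ s, s < t ∧ P r = c s) then Q r else P r with hP'def
  set Q' : Fin k → Fin n := fun r => if (∃ s, s < t ∧ P r = c s) then P r else Q r with hQ'def
  have hP'c : ∀ r, (∃ s, s < t ∧ P r = c s) → P' r = Q r := fun r h => if_pos h
  have hP'n : ∀ r, ¬(∃ s, s < t ∧ P r = c s) → P' r = P r := fun r h => if_neg h
  have hQ'c : ∀ r, (∃ s, s < t ∧ P r = c s) → Q' r = P r := fun r h => if_pos h
  have hQ'n : ∀ r, ¬(∃ s, s < t ∧ P r = c s) → Q' r = Q r := fun r h => if_neg h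
  have hk1 : 0 < k := Fin.pos r0
  have hcard1 : σ₁.card = k := by
    rw [hσ₁, Finset.card_image_of_injective _ hP, Finset.card_univ, Fintype.card_fin]
  have hcard2 : σ₂.card = k := by
    rw [hσ₂, Finset.card_image_of_injective _ hQ, Finset.card_univ, Fintype.card_fin]
  -- injectivity of P'
  have hP'inj : Injective P' := by
    intro a b hab
    by_cases ha : ∃ s, s < t ∧ P a = c s <;> by_cases hb : ∃ s, s < t ∧ P b = c s
    · obtain ⟨sa, hsa, hpa⟩ := ha
      obtain ⟨sb, hsb, hpb⟩ := hb
      have h1 : P' a = c (sa + 1) := (hP'c a ⟨sa, hsa, hpa⟩).trans (hQr a sa hsa hpa)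
      have h2 : P' b = c (sb + 1) := (hP'c b ⟨sb, hsb, hpb⟩).trans (hQr b sb hsb hpb)
      have h3 : sa + 1 = sb + 1 := hceq _ _ (by omega) (by omega) (by rw [← h1, ← h2, hab])
      apply hP
      have h4 : sa = sb := by omega
      rw [hpa, hpb, h4]
    · exfalso
      obtain ⟨sa, hsa, hpa⟩ := ha
      have h1 : P' a = c (sa + 1) := (hP'c a ⟨sa, hsa, hpa⟩).trans (hQr a sa hsa hpa)
      have h2 : P' b = P b := hP'n b hb
      rcases Nat.lt_or_ge (sa + 1) t with h | h
      · exact hb ⟨sa + 1, h, by rw [← h2, ← hab, h1]⟩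
      · have h3 : sa + 1 = t := by omega
        apply htnot
        rw [← h3, ← h1, hab, h2]
        exact Finset.mem_image_of_mem P (Finset.mem_univ b)
    · exfalso
      obtain ⟨sb, hsb, hpb⟩ := hb
      have h1 : P' b = c (sb + 1) := (hP'c b ⟨sb, hsb, hpb⟩).trans (hQr b sb hsb hpb)
      have h2 : P' a = P a := hP'n a ha
      rcases Nat.lt_or_ge (sb + 1) t with h | h
      · exact ha ⟨sb + 1, h, by rw [← h2, hab, h1]⟩
      · have h3 : sb + 1 = t := by omega
        apply htnot
        rw [← h3, ← h1, ← hab, h2]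
        exact Finset.mem_image_of_mem P (Finset.mem_univ a)
    · apply hP
      rw [← hP'n a ha, ← hP'n b hb, hab]
  -- injectivity of Q'
  have hQ'inj : Injective Q' := by
    intro a b hab
    by_cases ha : ∃ s, s < t ∧ P a = c s <;> by_cases hb : ∃ s, s < t ∧ P b = c s
    · apply hP
      rw [← hQ'c a ha, ← hQ'c b hb, hab]
    · exfalso
      obtain ⟨sa, hsa, hpa⟩ := ha
      have h1 : Q' a = c sa := (hQ'c a ⟨sa, hsa, hpa⟩).trans hpa
      exact hQnot b hb sa (by omega) (by rw [← hQ'n b hb, ← hab, h1])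
    · exfalso
      obtain ⟨sb, hsb, hpb⟩ := hb
      have h1 : Q' b = c sb := (hQ'c b ⟨sb, hsb, hpb⟩).trans hpb
      exact hQnot a ha sb (by omega) (by rw [← hQ'n a ha, hab, h1])
    · apply hQ
      rw [← hQ'n a ha, ← hQ'n b hb, hab]
  -- image of P'
  have himP' : Finset.image P' Finset.univ = insert (c t) (σ₁.erase i) := by
    apply Finset.eq_of_subset_of_card_le
    · intro x hx
      obtain ⟨r, -, hr⟩ := Finset.mem_image.mp hx
      by_cases hcond : ∃ s, s < t ∧ P r = c s
      · obtain ⟨s, hs, hps⟩ := hcond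
        have hx2 : x = c (s + 1) := by
          rw [← hr, hP'c r ⟨s, hs, hps⟩, hQr r s hs hps]
        rcases Nat.lt_or_ge (s + 1) t with h | h
        · apply Finset.mem_insert_of_mem
          rw [Finset.mem_erase]
          constructor
          · rw [hx2]
            intro hcon
            exact hi2 (hcon ▸ hmem2 s)
          · rw [hx2]; exact htmem _ h
        · have h3 : s + 1 = t := by omega
          rw [hx2, h3]
          exact Finset.mem_insert_self _ _
      · apply Finset.mem_insert_of_mem
        rw [Finset.mem_erase]
        have hx2 : x = P r := by rw [← hr, hP'n r hcond]
        constructor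
        · rw [hx2]
          intro hcon
          exact hcond ⟨0, htpos, hcon.trans hc0.symm⟩
        · rw [hx2]; exact Finset.mem_image_of_mem P (Finset.mem_univ r)
    · rw [Finset.card_insert_of_notMem (fun hmem => htnot (Finset.mem_of_mem_erase hmem)),
        Finset.card_erase_of_mem hi1, hcard1,
        Finset.card_image_of_injective _ hP'inj, Finset.card_univ, Fintype.card_fin]
      omega
  -- image of Q'
  have himQ' : Finset.image Q' Finset.univ = insert i (σ₂.erase (c t)) := by
    apply Finset.eq_of_subset_of_card_le
    · intro x hx
      obtain ⟨r, -, hr⟩ := Finset.mem_image.mp hx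
      by_cases hcond : ∃ s, s < t ∧ P r = c s
      · obtain ⟨s, hs, hps⟩ := hcond
        have hx2 : x = c s := by rw [← hr, hQ'c r ⟨s, hs, hps⟩, hps]
        match s, hs with
        | 0, _ =>
          rw [hx2, hc0]
          exact Finset.mem_insert_self _ _
        | v + 1, hv =>
          apply Finset.mem_insert_of_mem
          rw [Finset.mem_erase]
          refine ⟨?_, hx2 ▸ hmem2 v⟩
          rw [hx2]
          exact hinjt (v + 1) t hv le_rfl
      · apply Finset.mem_insert_of_mem
        rw [Finset.mem_erase]
        have hx2 : x = Q r := by rw [← hr, hQ'n r hcond]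
        refine ⟨?_, hx2 ▸ Finset.mem_image_of_mem Q (Finset.mem_univ r)⟩
        rw [hx2]
        exact hQnot r hcond t le_rfl
    · rw [Finset.card_insert_of_notMem (fun hmem => hi2 (Finset.mem_of_mem_erase hmem)),
        Finset.card_erase_of_mem hct2, hcard2,
        Finset.card_image_of_injective _ hQ'inj, Finset.card_univ, Fintype.card_fin]
      omega
  refine ⟨P', Q', c t, hP'inj, hQ'inj, hct2, htnot, himP', himQ', ?_⟩
  intro r
  by_cases hcond : ∃ s, s < t ∧ P r = c s
  · exact Or.inr ⟨hP'c r hcond, hQ'c r hcond⟩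
  · exact Or.inl ⟨hP'n r hcond, hQ'n r hcond⟩

lemma card_ins {k n : ℕ} (hk : 2 ≤ k) {ρ : Finset (Fin n)} (hρ : ρ.card = k - 2)
    {x y : Fin n} (hx : x ∉ ρ) (hy : y ∉ ρ) (hxy : x ≠ y) :
    (insert x (insert y ρ)).card = k := by
  rw [Finset.card_insert_of_notMem (by simp [hxy, hx]), Finset.card_insert_of_notMem hy, hρ]
  omega

lemma key_ineq {k n : ℕ} (hk : 2 ≤ k) (V : Matrix (Fin k) (Fin (n - k)) ℝ)
    {ρ : Finset (Fin n)} {i j l m : Fin n} (hρ : ρ.card = k - 2)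
    (hi : i ∉ ρ) (hj : j ∉ ρ) (hl : l ∉ ρ) (hm : m ∉ ρ)
    (hij : i ≠ j) (hil : i ≠ l) (him : i ≠ m) (hjl : j ≠ l) (hjm : j ≠ m) (hlm : l ≠ m) :
    min (tau V (insert i (insert l ρ)) + tau V (insert j (insert m ρ)))
        (tau V (insert i (insert m ρ)) + tau V (insert j (insert l ρ)))
      ≤ tau V (insert i (insert j ρ)) + tau V (insert l (insert m ρ)) := by
  classical
  have c1 : (insert i (insert j ρ)).card = k := card_ins hk hρ hi hj hij
  have c2 : (insert l (insert m ρ)).card = k := card_ins hk hρ hl hm hlm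
  obtain ⟨P, hPinj, hPmem, hPval⟩ := tau_exists_min V c1
  obtain ⟨Q, hQinj, hQmem, hQval⟩ := tau_exists_min V c2
  have himP : Finset.image P Finset.univ = insert i (insert j ρ) := image_eq c1 hPinj hPmem
  have himQ : Finset.image Q Finset.univ = insert l (insert m ρ) := image_eq c2 hQinj hQmem
  have hi1 : i ∈ Finset.image P Finset.univ := by
    rw [himP]; exact Finset.mem_insert_self _ _
  have hi2 : i ∉ Finset.image Q Finset.univ := by
    rw [himQ]
    simp only [Finset.mem_insert]
    push_neg
    exact ⟨hil, him, hi⟩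
  obtain ⟨P', Q', e, hP'inj, hQ'inj, he2, he1, himP', himQ', hswap⟩ :=
    swap_lemma hPinj hQinj hi1 hi2
  have hsum : (∑ r, augmented V r (P' r)) + (∑ r, augmented V r (Q' r))
      = tau V (insert i (insert j ρ)) + tau V (insert l (insert m ρ)) := by
    rw [hPval, hQval, ← Finset.sum_add_distrib, ← Finset.sum_add_distrib]
    apply Finset.sum_congr rfl
    intro r _
    rcases hswap r with ⟨h1, h2⟩ | ⟨h1, h2⟩
    · rw [h1, h2]
    · rw [h1, h2]; exact add_comm _ _
  have heP : (Finset.image P Finset.univ).erase i = insert j ρ := by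
    rw [himP]
    exact Finset.erase_insert (by simp [hij, hi])
  have helm : e = l ∨ e = m := by
    rw [himQ] at he2
    rcases Finset.mem_insert.mp he2 with h | h
    · exact Or.inl h
    rcases Finset.mem_insert.mp h with h | h
    · exact Or.inr h
    · exact absurd (himP ▸ Finset.mem_insert_of_mem (Finset.mem_insert_of_mem h)) he1
  rcases helm with h | h
  all_goals rw [h] at himP' himQ' he1 he2
  all_goals rw [himQ] at himQ'
  all_goals clear he2
  · -- e = l : bound the c-term
    refine le_trans (min_le_right _ _) ?_
    have hbP : tau V (insert j (insert l ρ)) ≤ ∑ r, augmented V r (P' r) := by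
      apply tau_le V (card_ins hk hρ hj hl hjl) hP'inj
      intro r
      have : P' r ∈ Finset.image P' Finset.univ := Finset.mem_image_of_mem _ (Finset.mem_univ r)
      rw [himP', heP, Finset.insert_comm] at this
      exact this
    have hbQ : tau V (insert i (insert m ρ)) ≤ ∑ r, augmented V r (Q' r) := by
      apply tau_le V (card_ins hk hρ hi hm him) hQ'inj
      intro r
      have : Q' r ∈ Finset.image Q' Finset.univ := Finset.mem_image_of_mem _ (Finset.mem_univ r)
      rw [himQ', show (insert l (insert m ρ)).erase l = insert m ρ from
        Finset.erase_insert (by simp [hlm, hl])] at this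
      exact this
    calc tau V (insert i (insert m ρ)) + tau V (insert j (insert l ρ))
        ≤ (∑ r, augmented V r (Q' r)) + (∑ r, augmented V r (P' r)) := add_le_add hbQ hbP
      _ = _ := (add_comm _ _).trans hsum
  · -- e = m : bound the b-term
    refine le_trans (min_le_left _ _) ?_
    have hbP : tau V (insert j (insert m ρ)) ≤ ∑ r, augmented V r (P' r) := by
      apply tau_le V (card_ins hk hρ hj hm hjm) hP'inj
      intro r
      have : P' r ∈ Finset.image P' Finset.univ := Finset.mem_image_of_mem _ (Finset.mem_univ r)
      rw [himP', heP, Finset.insert_comm] at this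
      exact this
    have hbQ : tau V (insert i (insert l ρ)) ≤ ∑ r, augmented V r (Q' r) := by
      apply tau_le V (card_ins hk hρ hi hl hil) hQ'inj
      intro r
      have : Q' r ∈ Finset.image Q' Finset.univ := Finset.mem_image_of_mem _ (Finset.mem_univ r)
      have hem : (insert l (insert m ρ)).erase m = insert l ρ := by
        rw [Finset.erase_insert_of_ne hlm, Finset.erase_insert hm]
      rw [himQ', hem] at this
      exact this
    calc tau V (insert i (insert l ρ)) + tau V (insert j (insert m ρ))
        ≤ (∑ r, augmented V r (Q' r)) + (∑ r, augmented V r (P' r)) := add_le_add hbQ hbP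
      _ = _ := (add_comm _ _).trans hsum

lemma tau_ne_top {k n : ℕ} (hkn : k < n) (V : Matrix (Fin k) (Fin (n - k)) ℝ)
    {σ : Finset (Fin n)} (h : σ.card = k) : tau V σ ≠ ⊤ := by
  classical
  set cst : Fin k → Fin n := Fin.castLE hkn.le with hcst
  set R0 : Finset (Fin k) := Finset.univ.filter (fun r => cst r ∈ σ) with hR0
  set Rc : Finset (Fin k) := Finset.univ.filter (fun r => cst r ∉ σ) with hRc
  set sSmall : Finset (Fin n) := σ.filter (fun x => (x : ℕ) < k) with hsS
  set sBig : Finset (Fin n) := σ.filter (fun x => ¬ (x : ℕ) < k) with hsB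
  have hsmall : sSmall = R0.image cst := by
    ext x
    simp only [hsS, hR0, Finset.mem_filter, Finset.mem_image, Finset.mem_univ, true_and]
    constructor
    · rintro ⟨hx, hxk⟩
      refine ⟨⟨(x : ℕ), hxk⟩, ?_, ?_⟩
      · show cst _ ∈ σ
        have : cst ⟨(x : ℕ), hxk⟩ = x := by
          apply Fin.ext
          rfl
        rw [this]; exact hx
      · apply Fin.ext; rfl
    · rintro ⟨r, hr, rfl⟩
      exact ⟨hr, r.isLt⟩
  have hcards : Rc.card = sBig.card := by
    have h1 : sSmall.card = R0.card := by
      rw [hsmall, Finset.card_image_of_injective _ (Fin.castLE_injective hkn.le)]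
    have h2 : Rc.card = k - R0.card := by
      rw [hRc, hR0, Finset.filter_not, Finset.card_sdiff_of_subset (Finset.filter_subset _ _),
        Finset.card_univ, Fintype.card_fin]
    have h3 : sBig.card = σ.card - sSmall.card := by
      rw [hsB, hsS, Finset.filter_not, Finset.card_sdiff_of_subset (Finset.filter_subset _ _)]
    have h4 : R0.card ≤ k := le_trans (Finset.card_filter_le _ _)
      (by rw [Finset.card_univ, Fintype.card_fin])
    have h5 : sSmall.card ≤ σ.card := Finset.card_filter_le _ _
    omega
  set eqv := Finset.equivOfCardEq hcards with heqv
  set f : Fin k → Fin n := fun r =>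
    if hmem : cst r ∈ σ then cst r
    else (eqv ⟨r, by rw [hRc]; simp [hmem]⟩ : {x // x ∈ sBig}) with hf
  have hfbig : ∀ r (hmem : ¬ cst r ∈ σ),
      f r = (eqv ⟨r, by rw [hRc]; simp [hmem]⟩ : {x // x ∈ sBig}) := by
    intro r hmem
    rw [hf]
    exact dif_neg hmem
  have hfs : ∀ r (hmem : cst r ∈ σ), f r = cst r := by
    intro r hmem
    rw [hf]
    exact dif_pos hmem
  have hfmem : ∀ r, f r ∈ σ := by
    intro r
    by_cases hmem : cst r ∈ σ
    · rw [hfs r hmem]; exact hmem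
    · rw [hfbig r hmem]
      exact Finset.mem_of_mem_filter _ (eqv ⟨r, by rw [hRc]; simp [hmem]⟩).2
  have hbigval : ∀ r (hmem : ¬ cst r ∈ σ), ¬ ((f r : ℕ) < k) := by
    intro r hmem
    rw [hfbig r hmem]
    exact (Finset.mem_filter.mp (eqv ⟨r, by rw [hRc]; simp [hmem]⟩).2).2
  have hfinj : Function.Injective f := by
    intro a b hab
    by_cases ha : cst a ∈ σ <;> by_cases hb : cst b ∈ σ
    · apply Fin.castLE_injective hkn.le
      show cst a = cst b
      rw [← hfs a ha, ← hfs b hb, hab]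
    · exfalso
      apply hbigval b hb
      rw [← hab, hfs a ha]
      exact a.isLt
    · exfalso
      apply hbigval a ha
      rw [hab, hfs b hb]
      exact b.isLt
    · have h1 : (⟨a, by rw [hRc]; simp [ha]⟩ : {x // x ∈ Rc}) = ⟨b, by rw [hRc]; simp [hb]⟩ := by
        apply eqv.injective
        apply Subtype.ext
        have := hab
        rw [hfbig a ha, hfbig b hb] at this
        exact_mod_cast this
      exact congrArg Subtype.val h1
  have hne : ∀ r, augmented V r (f r) ≠ ⊤ := by
    intro r
    by_cases hmem : cst r ∈ σ
    · rw [hfs r hmem]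
      simp [augmented, cst, r.isLt]
    · simp only [augmented]
      rw [dif_neg (hbigval r hmem)]
      exact WithTop.coe_ne_top
  have hsumne : (∑ r, augmented V r (f r)) ≠ ⊤ := by
    intro hcon
    obtain ⟨r, -, hr⟩ := WithTop.sum_eq_top.mp hcon
    exact hne r hr
  exact ne_top_of_le_ne_top hsumne (tau_le V h hfinj hfmem)


/-- For every `V ∈ ℝ^{k×(n-k)}`, `τ_V` is a finite tropical Plücker vector: its values
are finite, and for every `(k-2)`-subset `ρ` of `[n]` and pairwise distinct
`i, j, ℓ, m ∉ ρ`, the minimum of `τ_V(ρij)+τ_V(ρℓm)`, `τ_V(ρiℓ)+τ_V(ρjm)`,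
`τ_V(ρim)+τ_V(ρjℓ)` is attained at least twice. -/
theorem tau_is_tropical_pluecker (k n : ℕ) (hk : 2 ≤ k) (hkn : k < n)
    (V : Matrix (Fin k) (Fin (n - k)) ℝ) :
    (∀ σ : Finset (Fin n), σ.card = k → tau V σ ≠ ⊤) ∧
    ∀ (ρ : Finset (Fin n)) (i j l m : Fin n), ρ.card = k - 2 →
      i ∉ ρ → j ∉ ρ → l ∉ ρ → m ∉ ρ →
      i ≠ j → i ≠ l → i ≠ m → j ≠ l → j ≠ m → l ≠ m →
      (let a := tau V (insert i (insert j ρ)) + tau V (insert l (insert m ρ))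
       let b := tau V (insert i (insert l ρ)) + tau V (insert j (insert m ρ))
       let c := tau V (insert i (insert m ρ)) + tau V (insert j (insert l ρ))
       (a = b ∧ a ≤ c) ∨ (a = c ∧ a ≤ b) ∨ (b = c ∧ b ≤ a)) := by
  constructor
  · intro σ hσ
    exact tau_ne_top hkn V hσ
  · intro ρ i j l m hρ hi hj hl hm hij hil him hjl hjm hlm
    intro a b c
    have d1 : min b c ≤ a := key_ineq hk V hρ hi hj hl hm hij hil him hjl hjm hlm
    have d2 : min a c ≤ b := by
      have := key_ineq hk V hρ hi hl hj hm hil hij him hjl.symm hlm hjm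
      rwa [Finset.insert_comm l j ρ] at this
    have d3 : min a b ≤ c := by
      have := key_ineq hk V hρ hi hm hj hl him hij hil hjm.symm hlm.symm hjl
      rwa [Finset.insert_comm m l ρ, Finset.insert_comm m j ρ] at this
    rcases le_total a b with hab | hba
    · rcases le_total a c with hac | hca
      · rcases le_total b c with hbc | hcb
        · have hba' : b ≤ a := by rwa [min_eq_left hbc] at d1
          exact Or.inl ⟨le_antisymm hab hba', hac⟩
        · have hca' : c ≤ a := by rwa [min_eq_right hcb] at d1
          exact Or.inr (Or.inl ⟨le_antisymm hac hca', hab⟩)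
      · have hac' : a ≤ c := by rwa [min_eq_left hab] at d3
        exact Or.inr (Or.inl ⟨le_antisymm hac' hca, hab⟩)
    · rcases le_total b c with hbc | hcb
      · rcases le_total a c with hac | hca
        · have hab' : a ≤ b := by rwa [min_eq_left hac] at d2
          exact Or.inl ⟨le_antisymm hab' hba, hac⟩
        · have hcb' : c ≤ b := by rwa [min_eq_right hca] at d2
          exact Or.inr (Or.inr ⟨le_antisymm hbc hcb', hba⟩)
      · have hbc' : b ≤ c := by rwa [min_eq_right hba] at d3
        exact Or.inr (Or.inr ⟨le_antisymm hbc' hcb, hba⟩)
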